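/- Let n = 3k+1 with k ≥ 1 a natural number. Then the minimum number of coins in a downhill weighing that is balanced or a tight imbalance equals (5n²−n−4)/18; that is: (a) every downhill weighing a : {1,…,n} → ℤ (a(1) > … > a(n)) with Σ_{i=1}^n i·a(i) ∈ {0, −1} satisfies Σ_{i=1}^n |a(i)| ≥ (5n²−n−4)/18, and (b) there exists a downhill weighing a with Σ_{i=1}^n i·a(i) = 0 and Σ_{i=1}^n |a(i)| = (5n²−n−4)/18. -/

import Mathlib

open Finset

/-- Sum of a quadratic over a range, scaled by 6. -/
lemma sum_quad6 (A B C : ℤ) (m : ℕ) :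
    6 * ∑ i ∈ range m, (A * (i:ℤ)^2 + B * i + C)
      = A * m * (m-1) * (2*m-1) + 3 * B * m * (m-1) + 6 * C * m := by
  induction m with
  | zero => simp
  | succ m ih =>
      rw [sum_range_succ, mul_add, ih]
      push_cast
      ring

/-- Abel summation over `Icc 1 (m+1)`. -/
lemma abel_sum (a N : ℕ → ℤ) (m : ℕ) :
    ∑ i ∈ Icc 1 (m+1), (N i - N (i-1)) * a i
      = N (m+1) * a (m+1) - N 0 * a 1 + ∑ i ∈ Icc 1 m, N i * (a i - a (i+1)) := by
  induction m with
  | zero => simp [Finset.Icc_self]; ring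
  | succ m ih =>
      rw [Finset.sum_Icc_succ_top (by omega : 1 ≤ m + 1 + 1), ih,
        Finset.sum_Icc_succ_top (by omega : 1 ≤ m + 1) (fun i => N i * (a i - a (i+1)))]
      simp only [Nat.add_sub_cancel]
      ring

lemma icc_to_range (f : ℕ → ℤ) (m n : ℕ) :
    ∑ i ∈ Icc m n, f i = ∑ i ∈ range (n + 1 - m), f (m + i) := by
  rw [← Finset.Ico_add_one_right_eq_Icc, Finset.sum_Ico_eq_sum_range]

lemma icc_split (f : ℕ → ℤ) (a b : ℕ) (h : a ≤ b) :
    ∑ i ∈ Icc 1 b, f i = ∑ i ∈ Icc 1 a, f i + ∑ i ∈ Icc (a+1) b, f i := by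
  rw [show (1:ℕ) = 0 + 1 from rfl, Finset.Icc_add_one_left_eq_Ioc, Finset.Icc_add_one_left_eq_Ioc, zero_add, Finset.Icc_add_one_left_eq_Ioc,
    Finset.sum_Ioc_consecutive _ (Nat.zero_le a) h]

/-- For `n = 3k+1`, the minimum number of coins in a downhill weighing that is
a balance or a tight imbalance equals `(5n²−n−4)/18`. (Stated with both sides
multiplied by 18.) -/
theorem min_coins_three_k_plus_one (k n : ℕ) (hk : 1 ≤ k) (hn : n = 3 * k + 1) :
    (∀ a : ℕ → ℤ, (∀ i j : ℕ, 1 ≤ i → i < j → j ≤ n → a j < a i) →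
      (∑ i ∈ Finset.Icc 1 n, (i : ℤ) * a i = 0 ∨
        ∑ i ∈ Finset.Icc 1 n, (i : ℤ) * a i = -1) →
      5 * (n : ℤ) ^ 2 - (n : ℤ) - 4 ≤ 18 * ∑ i ∈ Finset.Icc 1 n, |a i|) ∧
    (∃ a : ℕ → ℤ, (∀ i j : ℕ, 1 ≤ i → i < j → j ≤ n → a j < a i) ∧
      ∑ i ∈ Finset.Icc 1 n, (i : ℤ) * a i = 0 ∧
      18 * ∑ i ∈ Finset.Icc 1 n, |a i| = 5 * (n : ℤ) ^ 2 - (n : ℤ) - 4) := by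
  subst hn
  constructor
  · -- Lower bound
    intro a ha hsum
    set n := 3 * k + 1 with hn
    set D : ℤ := (3*k+1) * (3*k+2) with hD
    set N : ℕ → ℤ := fun i =>
      (if i ≤ 2*k then D * i else D * (4*(k:ℤ)+1 - i)) - k * i * (i+1) with hN
    have hN0 : N 0 = 0 := by simp [hN]
    have hNn : N n = 0 := by
      simp only [hN, hn, if_neg (by omega : ¬ (3*k+1 ≤ 2*k))]
      push_cast
      ring
    -- pointwise bound on the dual certificate coefficients
    have hpt : ∀ i ∈ Icc 1 n, (2*(k:ℤ)*i + (N i - N (i-1))) * a i ≤ D * |a i| := by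
      intro i hi
      rw [mem_Icc] at hi
      have hcast : ((i - 1 : ℕ) : ℤ) = (i:ℤ) - 1 := by
        have := hi.1; push_cast [this]; ring
      have hDpos : (0:ℤ) < D := by positivity
      have habs : |2*(k:ℤ)*i + (N i - N (i-1))| ≤ D := by
        rcases le_or_gt i (2*k) with h1 | h1
        · have h2 : i - 1 ≤ 2*k := by omega
          simp only [hN, if_pos h1, if_pos h2]
          rw [hcast]
          have : 2*(k:ℤ)*i + ((D * i - k*i*(i+1)) - (D * ((i:ℤ)-1) - k*((i:ℤ)-1)*(((i:ℤ)-1)+1))) = D := by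
            ring
          rw [this, abs_of_pos hDpos]
        · rcases le_or_gt i (2*k+1) with h2 | h2
          · have hieq : i = 2*k+1 := by omega
            subst hieq
            have h3 : 2*k+1-1 ≤ 2*k := by omega
            simp only [hN, if_neg (by omega : ¬ (2*k+1 ≤ 2*k)), if_pos h3]
            rw [hcast]
            have : 2*(k:ℤ)*(2*k+1:ℕ) + ((D * (4*(k:ℤ)+1 - (2*k+1:ℕ)) - k*(2*k+1:ℕ)*((2*k+1:ℕ)+1))
                - (D * (((2*k+1:ℕ):ℤ)-1) - k*(((2*k+1:ℕ):ℤ)-1)*((((2*k+1:ℕ):ℤ)-1)+1))) = 0 := by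
              rw [hD]; push_cast; ring
            rw [this]
            simpa using hDpos.le
          · have h3 : ¬ (i - 1 ≤ 2*k) := by omega
            simp only [hN, if_neg (by omega : ¬ (i ≤ 2*k)), if_neg h3]
            rw [hcast]
            have : 2*(k:ℤ)*i + ((D * (4*(k:ℤ)+1 - i) - k*i*(i+1))
                - (D * (4*(k:ℤ)+1 - ((i:ℤ)-1)) - k*((i:ℤ)-1)*(((i:ℤ)-1)+1))) = -D := by
              ring
            rw [this, abs_neg, abs_of_pos hDpos]
      calc (2*(k:ℤ)*i + (N i - N (i-1))) * a i
          ≤ |(2*(k:ℤ)*i + (N i - N (i-1))) * a i| := le_abs_self _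
        _ = |2*(k:ℤ)*i + (N i - N (i-1))| * |a i| := abs_mul _ _
        _ ≤ D * |a i| := mul_le_mul_of_nonneg_right habs (abs_nonneg _)
    have h1 : ∑ i ∈ Icc 1 n, (2*(k:ℤ)*i + (N i - N (i-1))) * a i ≤ D * ∑ i ∈ Icc 1 n, |a i| := by
      rw [Finset.mul_sum]
      exact Finset.sum_le_sum hpt
    -- decompose the sum
    have h2 : ∑ i ∈ Icc 1 n, (2*(k:ℤ)*i + (N i - N (i-1))) * a i
        = 2*k * (∑ i ∈ Icc 1 n, (i:ℤ) * a i) + ∑ i ∈ Icc 1 (3*k), N i * (a i - a (i+1)) := by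
      have e1 : ∀ i ∈ Icc 1 n, (2*(k:ℤ)*i + (N i - N (i-1))) * a i
          = 2*(k:ℤ) * ((i:ℤ) * a i) + (N i - N (i-1)) * a i := by
        intro i _; ring
      rw [Finset.sum_congr rfl e1, Finset.sum_add_distrib, ← Finset.mul_sum]
      have := abel_sum a N (3*k)
      rw [show 3*k+1 = n from rfl] at this
      rw [this, hN0, hNn]
      ring
    -- nonnegativity of N on Icc 1 (3k)
    have h3 : ∀ i ∈ Icc 1 (3*k), N i ≤ N i * (a i - a (i+1)) := by
      intro i hi
      rw [mem_Icc] at hi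
      have hgap : 1 ≤ a i - a (i+1) := by
        have := ha i (i+1) hi.1 (by omega) (by omega)
        omega
      have hNnn : 0 ≤ N i := by
        have hi1 : (1:ℤ) ≤ i := by exact_mod_cast hi.1
        have hi2 : (i:ℤ) ≤ 3*k := by exact_mod_cast hi.2
        rcases le_or_gt i (2*k) with h | h
        · have h' : (i:ℤ) ≤ 2*k := by exact_mod_cast h
          simp only [hN, if_pos h, hD]
          nlinarith [hi1, h', mul_nonneg (by linarith : (0:ℤ) ≤ (i:ℤ)) (by positivity : (0:ℤ) ≤ (k:ℤ))]
        · have h' : (2*(k:ℤ)) < i := by exact_mod_cast h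
          simp only [hN, if_neg (by omega : ¬ (i ≤ 2*k)), hD]
          nlinarith [hi1, hi2, h', mul_nonneg (by linarith : (0:ℤ) ≤ 3*(k:ℤ) - i) (by positivity : (0:ℤ) ≤ (k:ℤ))]
      nlinarith [hNnn, hgap]
    have h3' : ∑ i ∈ Icc 1 (3*k), N i ≤ ∑ i ∈ Icc 1 (3*k), N i * (a i - a (i+1)) :=
      Finset.sum_le_sum h3
    -- closed form of sum of N
    have h4 : 6 * ∑ i ∈ Icc 1 (3*k), N i = 3 * D * ((k:ℤ) * (5*k+3)) := by
      rw [icc_split N (2*k) (3*k) (by omega)]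
      have hA : ∑ i ∈ Icc 1 (2*k), N i
          = ∑ i ∈ range (2*k), ((-(k:ℤ)) * (i:ℤ)^2 + (9*(k:ℤ)^2+6*k+2) * i + (9*(k:ℤ)^2+7*k+2)) := by
        rw [icc_to_range]
        rw [show 2*k+1-1 = 2*k from by omega]
        apply Finset.sum_congr rfl
        intro i hi
        rw [mem_range] at hi
        simp only [hN, if_pos (by omega : 1 + i ≤ 2*k), hD]
        push_cast
        ring
      have hB : ∑ i ∈ Icc (2*k+1) (3*k), N i
          = ∑ i ∈ range k, ((-(k:ℤ)) * (i:ℤ)^2 + (-(13*(k:ℤ)^2+12*k+2)) * i + (14*(k:ℤ)^3+12*(k:ℤ)^2+2*k)) := by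
        rw [icc_to_range]
        rw [show 3*k+1-(2*k+1) = k from by omega]
        apply Finset.sum_congr rfl
        intro i hi
        rw [mem_range] at hi
        simp only [hN, if_neg (by omega : ¬ (2*k+1+i ≤ 2*k)), hD]
        push_cast
        ring
      rw [hA, hB, mul_add, sum_quad6, sum_quad6, hD]
      push_cast
      ring
    -- combine
    set T := ∑ i ∈ Icc 1 n, |a i| with hT
    have hS : -2*(k:ℤ) ≤ 2*k * (∑ i ∈ Icc 1 n, (i:ℤ) * a i) := by
      rcases hsum with h | h <;> rw [h] <;> push_cast <;> nlinarith [hk]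
    have hmain : 3 * D * ((k:ℤ) * (5*k+3)) - 12*k ≤ 6 * (D * T) := by
      have : -2*(k:ℤ) + ∑ i ∈ Icc 1 (3*k), N i ≤ D * T := by
        calc -2*(k:ℤ) + ∑ i ∈ Icc 1 (3*k), N i
            ≤ 2*k * (∑ i ∈ Icc 1 n, (i:ℤ) * a i) + ∑ i ∈ Icc 1 (3*k), N i * (a i - a (i+1)) := by
              exact add_le_add hS h3'
          _ = ∑ i ∈ Icc 1 n, (2*(k:ℤ)*i + (N i - N (i-1))) * a i := h2.symm
          _ ≤ D * T := h1
      linarith [h4, this]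
    -- integer rounding
    have hKbound : 3 * ((k:ℤ)*(5*k+3)) - 2 ≤ 6 * T := by
      by_contra hcon
      push_neg at hcon
      have h6 : 6 * T ≤ 3 * ((k:ℤ)*(5*k+3)) - 3 := by omega
      have hDpos : (0:ℤ) < D := by positivity
      nlinarith [mul_le_mul_of_nonneg_left h6 hDpos.le, hmain, hk,
        (by exact_mod_cast hk : (1:ℤ) ≤ k)]
    have hgoal : 9 * ((k:ℤ)*(5*k+3)) ≤ 18 * T := by omega
    have : 5 * ((3*(k:ℤ)+1):ℤ)^2 - (3*(k:ℤ)+1) - 4 = 9 * ((k:ℤ)*(5*k+3)) := by ring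
    rw [hn]
    push_cast
    linarith [hgoal]
  · -- Construction
    refine ⟨fun i => (2*(k:ℤ)+1) - i, ?_, ?_, ?_⟩
    · intro i j _ hij _
      have : (i:ℤ) < j := by exact_mod_cast hij
      dsimp only
      linarith
    · have : ∑ i ∈ Icc 1 (3*k+1), (i:ℤ) * ((2*(k:ℤ)+1) - i)
          = ∑ i ∈ range (3*k+1), ((-1:ℤ) * (i:ℤ)^2 + (2*(k:ℤ)-1) * i + 2*k) := by
        rw [icc_to_range]
        rw [show 3*k+1+1-1 = 3*k+1 from by omega]
        apply Finset.sum_congr rfl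
        intro i _
        push_cast
        ring
      have h6 := sum_quad6 (-1) (2*(k:ℤ)-1) (2*k) (3*k+1)
      rw [← this] at h6
      push_cast at h6 ⊢
      linarith [h6, (by push_cast; ring : ((-1:ℤ)) * ((3*(k:ℤ)+1)) * ((3*(k:ℤ)+1)-1) * (2*((3*(k:ℤ)+1))-1) + 3 * (2*(k:ℤ)-1) * ((3*(k:ℤ)+1)) * ((3*(k:ℤ)+1)-1) + 6 * (2*(k:ℤ)) * ((3*(k:ℤ)+1)) = 0)]
    · have hsplit := icc_split (fun i => |(2*(k:ℤ)+1) - i|) (2*k+1) (3*k+1) (by omega)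
      have hA : ∑ i ∈ Icc 1 (2*k+1), |(2*(k:ℤ)+1) - i|
          = ∑ i ∈ range (2*k+1), ((0:ℤ) * (i:ℤ)^2 + (-1) * i + 2*k) := by
        rw [icc_to_range]
        rw [show 2*k+1+1-1 = 2*k+1 from by omega]
        apply Finset.sum_congr rfl
        intro i hi
        rw [mem_range] at hi
        have hi' : (i:ℤ) ≤ 2*k := by exact_mod_cast Nat.lt_succ_iff.mp hi
        rw [abs_of_nonneg (by push_cast; linarith)]
        push_cast
        ring
      have hB : ∑ i ∈ Icc (2*k+1+1) (3*k+1), |(2*(k:ℤ)+1) - i|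
          = ∑ i ∈ range k, ((0:ℤ) * (i:ℤ)^2 + (1:ℤ) * i + 1) := by
        rw [icc_to_range]
        rw [show 3*k+1+1-(2*k+1+1) = k from by omega]
        apply Finset.sum_congr rfl
        intro i hi
        rw [abs_of_nonpos (by push_cast; linarith [Nat.cast_nonneg (α := ℤ) i])]
        push_cast
        ring
      have s1 := sum_quad6 0 (-1) (2*k) (2*k+1)
      have s2 := sum_quad6 0 1 1 k
      rw [← hA] at s1
      rw [← hB] at s2
      rw [hsplit]
      push_cast at s1 s2 ⊢
      nlinarith [s1, s2]
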